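/- For every natural number n, every real number γ > 0, and every function c : Fin n → ℕ, the Chinese Restaurant Process probability satisfies the closed form P_γ(c) = γ^T · (∏_{t ∈ image of c} (n_t − 1)!) / (∏_{i=0}^{n−1} (γ + i)), where T is the cardinality of the image of c and n_t = |{i : c(i) = t}| is the size of the fiber of c over t. -/

import Mathlib

/-- The number of earlier customers seated at the same table as customer `i`. -/
def crpEarlier {n : ℕ} (c : Fin n → ℕ) (i : Fin n) : ℕ :=
  (Finset.univ.filter (fun j : Fin n => j < i ∧ c j = c i)).card

/-- The weight of customer `i` in the Chinese Restaurant Process with parameter `γ`: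
`k/(γ + i)` if `k > 0` earlier customers sit at `i`'s table, and `γ/(γ + i)` otherwise. -/
noncomputable def crpWeight (γ : ℝ) {n : ℕ} (c : Fin n → ℕ) (i : Fin n) : ℝ :=
  if 0 < crpEarlier c i then (crpEarlier c i : ℝ) / (γ + (i : ℕ))
  else γ / (γ + (i : ℕ))

/-- The Chinese Restaurant Process probability of a seating assignment `c`. -/
noncomputable def crpProb (γ : ℝ) {n : ℕ} (c : Fin n → ℕ) : ℝ :=
  ∏ i : Fin n, crpWeight γ c i

open Finset

lemma crp_rank_bij {α : Type*} [LinearOrder α] (s : Finset α) (k : Fin s.card) :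
    (s.filter (· < (s.orderIsoOfFin rfl k : α))).card = k := by
  set e := s.orderIsoOfFin rfl with he
  have h1 : s.filter (· < (e k : α)) = (Finset.univ.filter (· < k)).image (fun m => (e m : α)) := by
    ext x
    simp only [mem_filter, mem_image, mem_univ, true_and]
    constructor
    · rintro ⟨hxs, hx⟩
      refine ⟨e.symm ⟨x, hxs⟩, ?_, ?_⟩
      · rw [← e.lt_iff_lt]
        simpa using (show (⟨x, hxs⟩ : s) < e k from hx)
      · simp
    · rintro ⟨m, hm, rfl⟩
      exact ⟨(e m).2, by exact_mod_cast (e.lt_iff_lt.2 hm)⟩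
  rw [h1, Finset.card_image_of_injective _ (fun a b hab => e.injective (Subtype.ext hab))]
  have h2 : Finset.univ.filter (· < k) = Finset.Iio k := by ext x; simp
  rw [h2, Fin.card_Iio]

lemma crp_prod_rank {α : Type*} [LinearOrder α] (s : Finset α) (g : ℕ → ℝ) :
    ∏ i ∈ s, g ((s.filter (· < i)).card) = ∏ k ∈ Finset.range s.card, g k := by
  rw [← Finset.prod_coe_sort s (fun i => g ((s.filter (· < i)).card)),
    ← (s.orderIsoOfFin rfl).toEquiv.prod_comp
      (fun i : s => g ((s.filter (fun x => x < (i : α))).card)),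
    ← Fin.prod_univ_eq_prod_range (fun k => g k) s.card]
  exact Finset.prod_congr rfl (fun k _ => congrArg g (crp_rank_bij s k))

lemma crp_prod_g (γ : ℝ) (m : ℕ) :
    ∏ k ∈ Finset.range (m + 1), (if 0 < k then (k : ℝ) else γ)
      = γ * (Nat.factorial m : ℝ) := by
  rw [Finset.range_eq_Ico, Finset.prod_eq_prod_Ico_succ_bot (Nat.succ_pos m)]
  simp only [lt_self_iff_false, if_neg (lt_irrefl 0)]
  congr 1
  have : (∏ k ∈ Finset.Ico (0 + 1) (m + 1), if 0 < k then (k : ℝ) else γ)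
      = ∏ k ∈ Finset.Ico 1 (m + 1), ((k : ℕ) : ℝ) := by
    refine Finset.prod_congr (by norm_num) (fun k hk => ?_)
    rw [Finset.mem_Ico] at hk
    exact if_pos hk.1
  rw [show m.succ = m + 1 from rfl, this, ← Nat.cast_prod, Finset.prod_Ico_id_eq_factorial]

theorem stmt_11 (n : ℕ) (γ : ℝ) (hγ : 0 < γ) (c : Fin n → ℕ) :
    crpProb γ c
      = γ ^ (Finset.image c Finset.univ).card
          * (∏ t ∈ Finset.image c Finset.univ,
              ((Nat.factorial ((Finset.univ.filter (fun i : Fin n => c i = t)).card - 1) : ℝ)))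
          / ∏ i ∈ Finset.range n, (γ + (i : ℝ)) := by
  set g : ℕ → ℝ := fun k => if 0 < k then (k : ℝ) else γ with hg
  have hnum : ∏ i : Fin n, g (crpEarlier c i)
      = γ ^ (Finset.image c Finset.univ).card
        * ∏ t ∈ Finset.image c Finset.univ,
            ((Nat.factorial ((Finset.univ.filter (fun i : Fin n => c i = t)).card - 1) : ℝ)) := by
    rw [← Finset.prod_fiberwise_of_maps_to (fun x _ => Finset.mem_image_of_mem c (mem_univ x))
      (fun i => g (crpEarlier c i))]
    have step : ∀ t ∈ Finset.image c Finset.univ,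
        ∏ i ∈ Finset.univ.filter (fun i => c i = t), g (crpEarlier c i)
          = γ * ((Nat.factorial ((Finset.univ.filter (fun i : Fin n => c i = t)).card - 1)) : ℝ) := by
      intro t ht
      set s := Finset.univ.filter (fun i : Fin n => c i = t) with hs
      have hfiber : ∀ i ∈ s, crpEarlier c i = (s.filter (· < i)).card := by
        intro i hi
        have hci : c i = t := (Finset.mem_filter.mp hi).2
        unfold crpEarlier
        congr 1
        ext j
        simp [hs, hci, and_comm]
      rw [Finset.prod_congr rfl (fun i hi => by rw [hfiber i hi]), crp_prod_rank s g]
      obtain ⟨m, hm⟩ : ∃ m, s.card = m + 1 := by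
        rw [Finset.mem_image] at ht
        obtain ⟨i, _, hi⟩ := ht
        have : i ∈ s := by simp [hs, hi]
        have := Finset.card_pos.mpr ⟨i, this⟩
        exact ⟨s.card - 1, by omega⟩
      rw [hm, crp_prod_g γ m]
      simp [hm]
    rw [Finset.prod_congr rfl step, Finset.prod_mul_distrib, Finset.prod_const]
  have hden : ∀ i : Fin n, γ + ((i : ℕ) : ℝ) ≠ 0 := fun i => by positivity
  have : crpProb γ c = (∏ i : Fin n, g (crpEarlier c i)) / ∏ i : Fin n, (γ + ((i : ℕ) : ℝ)) := by
    rw [← Finset.prod_div_distrib]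
    refine Finset.prod_congr rfl (fun i _ => ?_)
    unfold crpWeight
    by_cases h : 0 < crpEarlier c i
    · rw [if_pos h, hg]; simp [h]
    · rw [if_neg h, hg]; simp [h]
  rw [this, hnum]
  congr 1
  exact Fin.prod_univ_eq_prod_range (fun i => γ + (i : ℝ)) n
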